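/- Corollary 1 (composite convex optimization): let f : ℝ^d → ℝ be convex and differentiable, and run the CODER iteration with F = ∇f, where ∇f satisfies the blockwise Lipschitz assumption with masked-matrix constant L and g(x) = ∑_i gⁱ(xⁱ) with each gⁱ γ-strongly convex (γ ≥ 0). Let x⋆ be any minimizer of f + g over ℝ^d and x̃_k = (1/A_k)∑_{j=1}^k a_j x_j. Then for every k ≥ 1: f(x̃_k) + g(x̃_k) − (f(x⋆) + g(x⋆)) ≤ ‖x⋆ − x₀‖²/(2A_k), where A_k ≥ max{k/(2L), (1/(2L))(1 + γ/(2L))^{k−1}}. -/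

import Mathlib

open scoped RealInnerProductSpace

/-- Operator norm of a square real matrix, viewed as a linear map on Euclidean space. -/
noncomputable def matOpNorm {d : ℕ} (Q : Matrix (Fin d) (Fin d) ℝ) : ℝ :=
  ‖Matrix.toEuclideanCLM (𝕜 := ℝ) Q‖

/-- The quadratic form `vᵀ Q v` on Euclidean space. -/
noncomputable def quadForm {d : ℕ} (Q : Matrix (Fin d) (Fin d) ℝ)
    (v : EuclideanSpace ℝ (Fin d)) : ℝ :=
  ⟪v, Matrix.toEuclideanCLM (𝕜 := ℝ) Q v⟫



section Aux
variable {E : Type*} [NormedAddCommGroup E] [InnerProductSpace ℝ E]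

lemma aux_affine_convexOn (v : E) (c : ℝ) :
    ConvexOn ℝ Set.univ (fun z : E => ⟪v, z⟫ + c) := by
  refine ⟨convex_univ, fun x _ y _ a b ha hb hab => le_of_eq ?_⟩
  simp only [inner_add_right, real_inner_smul_right, smul_eq_mul]
  linear_combination (-c) * hab

lemma aux_strong_min {h : E → ℝ} {μ : ℝ} (hμ : 0 ≤ μ)
    (hconv : ConvexOn ℝ Set.univ fun z => h z - μ / 2 * ‖z‖ ^ 2)
    {x : E} (hmin : ∀ z, h x ≤ h z) (z : E) :
    h x + μ / 2 * ‖z - x‖ ^ 2 ≤ h z := by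
  have hsc : StrongConvexOn Set.univ μ h := strongConvexOn_iff_convex.mpr hconv
  set D := μ / 2 * ‖z - x‖ ^ 2 with hD
  have hD0 : 0 ≤ D := by positivity
  have key : ∀ t : ℝ, 0 < t → t < 1 → h x + (1 - t) * D ≤ h z := by
    intro t ht0 ht1
    have h2 := hsc.2 (Set.mem_univ z) (Set.mem_univ x)
      (le_of_lt ht0) (by linarith : (0:ℝ) ≤ 1 - t) (by ring)
    have h3 : h x ≤ h (t • z + (1 - t) • x) := hmin _
    simp only [smul_eq_mul] at h2
    rw [← hD] at h2
    nlinarith [h2, h3]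
  rcases eq_or_lt_of_le hD0 with hDz | hDpos
  · rw [← hDz]; simpa using hmin z
  · refine le_of_forall_pos_le_add ?_
    intro ε hε
    set t := min (1/2 : ℝ) (ε / (2 * D)) with ht
    have ht0 : 0 < t := lt_min (by norm_num) (by positivity)
    have ht1 : t < 1 := lt_of_le_of_lt (min_le_left _ _) (by norm_num)
    have hk := key t ht0 ht1
    have htD : t * D ≤ ε / 2 := by
      calc t * D ≤ ε / (2 * D) * D :=
            mul_le_mul_of_nonneg_right (min_le_right _ _) hD0
        _ = ε / 2 := by field_simp
    nlinarith [hk, htD, hε]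

lemma aux_telescope (c : ℕ → ℝ) (k : ℕ) :
    ∑ j ∈ Finset.Icc 1 k, (c j - c (j - 1)) = c k - c 0 := by
  induction k with
  | zero => simp
  | succ n ih =>
    rw [Finset.sum_Icc_succ_top (by omega : 1 ≤ n + 1), ih]
    simp

end Aux



section Aux2
variable {d : ℕ}

lemma aux_inner_sum (v w : EuclideanSpace ℝ (Fin d)) : ⟪v, w⟫ = ∑ ℓ, v ℓ * w ℓ := by
  rw [PiLp.inner_apply]
  simp [RCLike.inner_apply, mul_comm]

lemma aux_norm_sq (v : EuclideanSpace ℝ (Fin d)) : ∑ ℓ, (v ℓ) ^ 2 = ‖v‖ ^ 2 := by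
  rw [← real_inner_self_eq_norm_sq, aux_inner_sum]
  simp [sq]

lemma aux_clm_apply (M : Matrix (Fin d) (Fin d) ℝ) (v : EuclideanSpace ℝ (Fin d)) (ℓ : Fin d) :
    (Matrix.toEuclideanCLM (𝕜 := ℝ) M v) ℓ = ∑ t, M ℓ t * v t := by
  have h := Matrix.ofLp_toEuclideanCLM (𝕜 := ℝ) M v
  have : (Matrix.toEuclideanCLM (𝕜 := ℝ) M v) ℓ = (WithLp.equiv 2 _ (Matrix.toEuclideanCLM (𝕜 := ℝ) M v)) ℓ := rfl
  rw [this]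
  rfl

lemma aux_quad_coord (M : Matrix (Fin d) (Fin d) ℝ) (v : EuclideanSpace ℝ (Fin d)) :
    quadForm M v = ∑ ℓ, ∑ t, v ℓ * (M ℓ t * v t) := by
  rw [quadForm, aux_inner_sum]
  refine Finset.sum_congr rfl fun ℓ _ => ?_
  rw [aux_clm_apply, Finset.mul_sum]

lemma aux_quad_le (M : Matrix (Fin d) (Fin d) ℝ) (v : EuclideanSpace ℝ (Fin d)) :
    quadForm M v ≤ matOpNorm M * ‖v‖ ^ 2 := by
  calc quadForm M v ≤ ‖v‖ * ‖Matrix.toEuclideanCLM (𝕜 := ℝ) M v‖ := real_inner_le_norm _ _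
    _ ≤ ‖v‖ * (matOpNorm M * ‖v‖) := by
        apply mul_le_mul_of_nonneg_left (ContinuousLinearMap.le_opNorm _ _) (norm_nonneg _)
    _ = matOpNorm M * ‖v‖ ^ 2 := by ring

lemma aux_quad_sum {m : ℕ} (M : Fin m → Matrix (Fin d) (Fin d) ℝ) (v : EuclideanSpace ℝ (Fin d)) :
    quadForm (∑ i, M i) v = ∑ i, quadForm (M i) v := by
  unfold quadForm
  rw [map_sum]
  rw [ContinuousLinearMap.sum_apply, inner_sum]

lemma aux_grad_ineq {f : EuclideanSpace ℝ (Fin d) → ℝ}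
    (hconv : ConvexOn ℝ Set.univ f) (hdiff : ∀ z, DifferentiableAt ℝ f z)
    (z w : EuclideanSpace ℝ (Fin d)) :
    f z - f w ≤ ⟪gradient f z, z - w⟫ := by
  rcases eq_or_ne w z with rfl | hne
  · simp
  have hgrad : HasGradientAt f (gradient f z) z := (hdiff z).hasGradientAt
  have hF : HasFDerivAt f (InnerProductSpace.toDual ℝ _ (gradient f z)) z :=
    hgrad.hasFDerivAt
  set v := w - z with hv
  have hline : HasDerivAt (fun t : ℝ => t • v + z) v 0 := by
    simpa using ((hasDerivAt_id (0:ℝ)).smul_const v).add_const z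
  have hcomp : HasDerivAt (fun t : ℝ => f (t • v + z)) ⟪gradient f z, v⟫ 0 := by
    have h0 : (0:ℝ) • v + z = z := by simp
    have hF' : HasFDerivAt f (InnerProductSpace.toDual ℝ _ (gradient f z)) ((0:ℝ) • v + z) := by
      rw [h0]; exact hF
    have := hF'.comp_hasDerivAt (x := (0:ℝ)) hline
    simpa [InnerProductSpace.toDual_apply_apply, Function.comp_def] using this
  have hφconv : ConvexOn ℝ Set.univ (fun t : ℝ => f (t • v + z)) := by
    have hmap := hconv.comp_affineMap (AffineMap.lineMap z w)
    simp only [Set.preimage_univ] at hmap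
    have heq : (fun t : ℝ => f (t • v + z)) = f ∘ (AffineMap.lineMap z w) := by
      funext t
      simp only [Function.comp_apply, AffineMap.lineMap_apply_module, hv]
      congr 1
      module
    rw [heq]; exact hmap
  have hslope := hφconv.le_slope_of_hasDerivAt (Set.mem_univ (0:ℝ)) (Set.mem_univ (1:ℝ))
    one_pos hcomp
  have h1 : (fun t : ℝ => f (t • v + z)) 1 = f w := by simp [hv]
  have h0 : (fun t : ℝ => f (t • v + z)) 0 = f z := by simp
  rw [slope_def_field] at hslope
  simp only [h1, h0] at hslope
  have : ⟪gradient f z, v⟫ ≤ f w - f z := by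
    simpa using hslope
  have hsub : ⟪gradient f z, z - w⟫ = - ⟪gradient f z, v⟫ := by
    rw [hv, ← inner_neg_right]; congr 1; abel
  linarith [this, hsub.ge, hsub.le]

end Aux2


lemma aux_Dbound {d m : ℕ} (blk : Fin d → Fin m)
    (F : EuclideanSpace ℝ (Fin d) → EuclideanSpace ℝ (Fin d))
    (L : ℝ) (hL : 0 ≤ L)
    (Q Qhat : Fin m → Matrix (Fin d) (Fin d) ℝ)
    (hlip : ∀ (i : Fin m) (z w : EuclideanSpace ℝ (Fin d)),
      ∑ j ∈ Finset.univ.filter (fun j => blk j = i), (F z j - F w j) ^ 2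
        ≤ quadForm (Q i) (z - w))
    (hQhat : ∀ (i : Fin m) (j k : Fin d),
      Qhat i j k = if i ≤ blk j ∧ i ≤ blk k then Q i j k else 0)
    (hL2 : L ^ 2 = matOpNorm (∑ i, Qhat i))
    (z w pv : EuclideanSpace ℝ (Fin d))
    (hpv : ∀ ℓ, pv ℓ = F (WithLp.toLp 2 (fun ℓ' => if blk ℓ' < blk ℓ then z ℓ' else w ℓ')) ℓ)
    (v : EuclideanSpace ℝ (Fin d)) :
    ⟪F z - pv, v⟫ ≤ L * ‖z - w‖ * ‖v‖ := by
  classical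
  set r : EuclideanSpace ℝ (Fin d) := z - w with hr
  -- the mixed points
  set W : Fin m → EuclideanSpace ℝ (Fin d) :=
    fun i => WithLp.toLp 2 (fun ℓ' => if blk ℓ' < i then z ℓ' else w ℓ') with hW
  have hmask : ∀ i : Fin m, quadForm (Q i) (z - W i) = quadForm (Qhat i) r := by
    intro i
    rw [aux_quad_coord, aux_quad_coord]
    refine Finset.sum_congr rfl fun ℓ _ => Finset.sum_congr rfl fun t _ => ?_
    have hsl : (z - W i) ℓ = if blk ℓ < i then 0 else r ℓ := by
      simp only [PiLp.sub_apply, hW, hr]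
      by_cases h : blk ℓ < i <;> simp [h]
    have hst : (z - W i) t = if blk t < i then 0 else r t := by
      simp only [PiLp.sub_apply, hW, hr]
      by_cases h : blk t < i <;> simp [h]
    rw [hsl, hst, hQhat]
    by_cases h1 : blk ℓ < i <;> by_cases h2 : blk t < i <;>
      simp [h1, h2, not_lt.mp, not_le.mpr, *]
  have hblk_sum : ∀ i : Fin m,
      ∑ ℓ ∈ Finset.univ.filter (fun ℓ => blk ℓ = i), ((F z - pv) ℓ) ^ 2
        ≤ quadForm (Qhat i) r := by
    intro i
    have heq : ∀ ℓ ∈ Finset.univ.filter (fun ℓ => blk ℓ = i),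
        ((F z - pv) ℓ) ^ 2 = (F z ℓ - F (W i) ℓ) ^ 2 := by
      intro ℓ hℓ
      have hbi : blk ℓ = i := (Finset.mem_filter.mp hℓ).2
      rw [PiLp.sub_apply, hpv ℓ, hbi]
    rw [Finset.sum_congr rfl heq]
    exact (hlip i z (W i)).trans (le_of_eq (hmask i))
  -- Cauchy-Schwarz chain
  set D : EuclideanSpace ℝ (Fin d) := F z - pv with hD
  have step1 : ⟪D, v⟫ = ∑ i : Fin m, ∑ ℓ ∈ Finset.univ.filter (fun ℓ => blk ℓ = i), D ℓ * v ℓ := by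
    rw [aux_inner_sum]
    exact (Finset.sum_fiberwise _ blk _).symm
  have step2 : ∀ i : Fin m, ∑ ℓ ∈ Finset.univ.filter (fun ℓ => blk ℓ = i), D ℓ * v ℓ
      ≤ Real.sqrt (∑ ℓ ∈ Finset.univ.filter (fun ℓ => blk ℓ = i), (D ℓ)^2)
        * Real.sqrt (∑ ℓ ∈ Finset.univ.filter (fun ℓ => blk ℓ = i), (v ℓ)^2) := fun i =>
    Real.sum_mul_le_sqrt_mul_sqrt _ _ _
  have step3 : ∑ i : Fin m,
      Real.sqrt (∑ ℓ ∈ Finset.univ.filter (fun ℓ => blk ℓ = i), (D ℓ)^2)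
        * Real.sqrt (∑ ℓ ∈ Finset.univ.filter (fun ℓ => blk ℓ = i), (v ℓ)^2)
      ≤ Real.sqrt (∑ i : Fin m, ∑ ℓ ∈ Finset.univ.filter (fun ℓ => blk ℓ = i), (D ℓ)^2)
        * Real.sqrt (∑ i : Fin m, ∑ ℓ ∈ Finset.univ.filter (fun ℓ => blk ℓ = i), (v ℓ)^2) :=
    Real.sum_sqrt_mul_sqrt_le _ (fun i => Finset.sum_nonneg fun ℓ _ => sq_nonneg _)
      (fun i => Finset.sum_nonneg fun ℓ _ => sq_nonneg _)
  have hDsum : ∑ i : Fin m, ∑ ℓ ∈ Finset.univ.filter (fun ℓ => blk ℓ = i), (D ℓ)^2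
      ≤ L^2 * ‖r‖^2 := by
    calc ∑ i : Fin m, ∑ ℓ ∈ Finset.univ.filter (fun ℓ => blk ℓ = i), (D ℓ)^2
        ≤ ∑ i : Fin m, quadForm (Qhat i) r := Finset.sum_le_sum fun i _ => hblk_sum i
      _ = quadForm (∑ i, Qhat i) r := (aux_quad_sum _ _).symm
      _ ≤ matOpNorm (∑ i, Qhat i) * ‖r‖^2 := aux_quad_le _ _
      _ = L^2 * ‖r‖^2 := by rw [hL2]
  have hvsum : ∑ i : Fin m, ∑ ℓ ∈ Finset.univ.filter (fun ℓ => blk ℓ = i), (v ℓ)^2 = ‖v‖^2 := by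
    rw [Finset.sum_fiberwise _ blk _]; exact aux_norm_sq v
  calc ⟪D, v⟫ = ∑ i : Fin m, ∑ ℓ ∈ Finset.univ.filter (fun ℓ => blk ℓ = i), D ℓ * v ℓ := step1
    _ ≤ ∑ i : Fin m, Real.sqrt (∑ ℓ ∈ Finset.univ.filter (fun ℓ => blk ℓ = i), (D ℓ)^2)
        * Real.sqrt (∑ ℓ ∈ Finset.univ.filter (fun ℓ => blk ℓ = i), (v ℓ)^2) :=
      Finset.sum_le_sum fun i _ => step2 i
    _ ≤ Real.sqrt (∑ i : Fin m, ∑ ℓ ∈ Finset.univ.filter (fun ℓ => blk ℓ = i), (D ℓ)^2)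
        * Real.sqrt (∑ i : Fin m, ∑ ℓ ∈ Finset.univ.filter (fun ℓ => blk ℓ = i), (v ℓ)^2) := step3
    _ ≤ Real.sqrt (L^2 * ‖r‖^2) * Real.sqrt (‖v‖^2) := by
        apply mul_le_mul (Real.sqrt_le_sqrt hDsum) (le_of_eq (by rw [hvsum]))
          (Real.sqrt_nonneg _) (Real.sqrt_nonneg _)
    _ = L * ‖r‖ * ‖v‖ := by
        rw [Real.sqrt_sq (norm_nonneg v)]
        congr 1
        rw [← mul_pow, Real.sqrt_sq (by positivity)]


section A4
variable {E : Type*} [NormedAddCommGroup E] [InnerProductSpace ℝ E]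

lemma aux_shift (f : ℕ → ℝ) (a b : ℕ) :
    ∑ j ∈ Finset.Icc (a+1) (b+1), f j = ∑ j ∈ Finset.Icc a b, f (j+1) := by
  rw [← Finset.map_add_right_Icc, Finset.sum_map]
  rfl

lemma aux_split_first (f : ℕ → ℝ) (k : ℕ) (hk : 1 ≤ k) :
    ∑ j ∈ Finset.Icc 1 k, f j = f 1 + ∑ j ∈ Finset.Icc 2 k, f j := by
  have h2 : Finset.Icc 1 k = Finset.Ioc 0 k := (Finset.Icc_add_one_left_eq_Ioc 0 k)
  have h3 : Finset.Icc 2 k = Finset.Ioc 1 k := (Finset.Icc_add_one_left_eq_Ioc 1 k)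
  have h4 := Finset.sum_Ioc_consecutive f (by norm_num : (0:ℕ) ≤ 1) hk
  have h5 : Finset.Ioc 0 1 = ({1} : Finset ℕ) := by decide
  rw [h2, h3, ← h4, h5, Finset.sum_singleton]

lemma aux_normsq_convexOn {c : ℝ} (hc : 0 ≤ c) :
    ConvexOn ℝ Set.univ (fun z : E => c * ‖z‖ ^ 2) := by
  have h : StrongConvexOn Set.univ (2*c) (fun z : E => c * ‖z‖ ^ 2) := by
    apply strongConvexOn_iff_convex.mpr
    have : (fun z : E => c * ‖z‖ ^ 2 - 2*c / 2 * ‖z‖ ^ 2) = fun _ => (0:ℝ) := by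
      funext z; ring
    rw [this]
    exact convexOn_const 0 convex_univ
  exact h.convexOn (fun r => by positivity)

lemma aux_convexOn_sum {ι : Type*} (s : Finset ι) (f : ι → E → ℝ)
    (h : ∀ i ∈ s, ConvexOn ℝ Set.univ (f i)) :
    ConvexOn ℝ Set.univ (fun z => ∑ i ∈ s, f i z) := by
  classical
  induction s using Finset.induction with
  | empty => simpa using convexOn_const 0 convex_univ
  | @insert i s his ih =>
    have heq : (fun z => ∑ j ∈ insert i s, f j z)
        = (fun z => f i z + ∑ j ∈ s, f j z) := by
      funext z; rw [Finset.sum_insert his]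
    rw [heq]
    exact (h i (Finset.mem_insert_self i s)).add
      (ih fun j hj => h j (Finset.mem_insert_of_mem hj))

lemma aux_psi_convexOn (Gf : E → ℝ) (γ : ℝ)
    (Gsc : ConvexOn ℝ Set.univ fun z => Gf z - γ / 2 * ‖z‖ ^ 2)
    (Aj : ℝ) (hAj : 0 ≤ Aj) (V x0 u : E) (Gu : ℝ) :
    ConvexOn ℝ Set.univ fun z =>
      (⟪V, z - u⟫ + Aj * (Gf z - Gu) + 1/2 * ‖z - x0‖ ^ 2) - (1 + γ * Aj)/2 * ‖z‖ ^ 2 := by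
  have h1 : ConvexOn ℝ Set.univ fun z : E => Aj • (Gf z - γ / 2 * ‖z‖ ^ 2) := Gsc.smul hAj
  have h2 := aux_affine_convexOn (V - x0) (-⟪V, u⟫ - Aj * Gu + 1/2 * ‖x0‖ ^ 2)
  have h3 := h1.add h2
  have heq : (fun z : E =>
      (⟪V, z - u⟫ + Aj * (Gf z - Gu) + 1/2 * ‖z - x0‖ ^ 2) - (1 + γ * Aj)/2 * ‖z‖ ^ 2)
      = (fun z : E => Aj • (Gf z - γ / 2 * ‖z‖ ^ 2))
        + (fun z : E => ⟪V - x0, z⟫ + (-⟪V, u⟫ - Aj * Gu + 1/2 * ‖x0‖ ^ 2)) := by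
    funext z
    simp only [Pi.add_apply, smul_eq_mul]
    rw [inner_sub_right, inner_sub_left, norm_sub_sq_real, real_inner_comm z x0]
    ring
  rw [heq]
  exact h3

lemma aux_jensen (h : E → ℝ) (hconv : ConvexOn ℝ Set.univ h) (k : ℕ)
    (a : ℕ → ℝ) (x : ℕ → E) (Ak : ℝ) (hAk : 0 < Ak)
    (hsum : ∑ j ∈ Finset.Icc 1 k, a j = Ak) (hnn : ∀ j, 0 ≤ a j) :
    Ak * h (Ak⁻¹ • ∑ j ∈ Finset.Icc 1 k, a j • x j)
      ≤ ∑ j ∈ Finset.Icc 1 k, a j * h (x j) := by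
  have hAne : Ak ≠ 0 := ne_of_gt hAk
  have hw1 : ∑ j ∈ Finset.Icc 1 k, a j / Ak = 1 := by
    rw [← Finset.sum_div, hsum, div_self hAne]
  have hj := hconv.map_sum_le (t := Finset.Icc 1 k) (w := fun j => a j / Ak) (p := x)
    (fun j _ => div_nonneg (hnn j) (le_of_lt hAk)) hw1 (fun j _ => Set.mem_univ _)
  have harg : ∑ j ∈ Finset.Icc 1 k, (a j / Ak) • x j
      = Ak⁻¹ • ∑ j ∈ Finset.Icc 1 k, a j • x j := by
    rw [Finset.smul_sum]
    refine Finset.sum_congr rfl fun j _ => ?_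
    rw [smul_smul]
    congr 1
    field_simp
  rw [harg] at hj
  calc Ak * h (Ak⁻¹ • ∑ j ∈ Finset.Icc 1 k, a j • x j)
      ≤ Ak * ∑ j ∈ Finset.Icc 1 k, (a j / Ak) * h (x j) := by
        apply mul_le_mul_of_nonneg_left hj (le_of_lt hAk)
    _ = ∑ j ∈ Finset.Icc 1 k, a j * h (x j) := by
        rw [Finset.mul_sum]
        refine Finset.sum_congr rfl fun j _ => ?_
        field_simp
end A4


set_option maxHeartbeats 2000000 in
/-- **Statement 14** (Corollary 1: composite convex optimization). Let `f` be convex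
and differentiable and run CODER with `F = ∇f`, where `∇f` satisfies the blockwise
Lipschitz assumption with masked-matrix constant `L`, and `g(x) = ∑ᵢ gⁱ(xⁱ)` with
each `gⁱ` `γ`-strongly convex (`γ ≥ 0`). If `x⋆` minimizes `f + g` and
`x̃_k = (1/A_k)∑_{j=1}^k a_j x_j`, then for every `k ≥ 1`:
`f(x̃_k) + g(x̃_k) − (f(x⋆) + g(x⋆)) ≤ ‖x⋆ − x₀‖²/(2A_k)`, where
`A_k ≥ max{k/(2L), (1/(2L))(1 + γ/(2L))^{k−1}}`. -/
theorem stmt14 {d m : ℕ} (blk : Fin d → Fin m) (hblk : Monotone blk)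
    (F : EuclideanSpace ℝ (Fin d) → EuclideanSpace ℝ (Fin d))
    (γ L : ℝ) (hγ : 0 ≤ γ) (hL : 0 < L)
    -- blockwise Lipschitz assumption
    (Q : Fin m → Matrix (Fin d) (Fin d) ℝ)
    (hpsd : ∀ i, (Q i).PosSemidef)
    (hlip : ∀ (i : Fin m) (z w : EuclideanSpace ℝ (Fin d)),
      ∑ j ∈ Finset.univ.filter (fun j => blk j = i), (F z j - F w j) ^ 2
        ≤ quadForm (Q i) (z - w))
    (Qhat : Fin m → Matrix (Fin d) (Fin d) ℝ)
    (hQhat : ∀ (i : Fin m) (j k : Fin d),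
      Qhat i j k = if i ≤ blk j ∧ i ≤ blk k then Q i j k else 0)
    (hL2 : L ^ 2 = matOpNorm (∑ i, Qhat i))
    -- the block components of the separable regularizer g
    (g : Fin m → EuclideanSpace ℝ (Fin d) → ℝ)
    (hgdep : ∀ (i : Fin m) (z w : EuclideanSpace ℝ (Fin d)),
      (∀ j, blk j = i → z j = w j) → g i z = g i w)
    (hgsc : ∀ i : Fin m, ConvexOn ℝ Set.univ (fun z : EuclideanSpace ℝ (Fin d) =>
      g i z - γ / 2 * ∑ j ∈ Finset.univ.filter (fun j => blk j = i), (z j) ^ 2))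
    (G : EuclideanSpace ℝ (Fin d) → ℝ) (hG : ∀ z, G z = ∑ i, g i z)
    -- step sizes
    (a A : ℕ → ℝ) (ha0 : a 0 = 0) (hA0 : A 0 = 0)
    (ha : ∀ k : ℕ, a (k + 1) = (1 + γ * A k) / (2 * L))
    (hA : ∀ k : ℕ, A (k + 1) = A k + a (k + 1))
    -- iterates, cyclic coordinate gradients, and extrapolated gradients
    (x p q : ℕ → EuclideanSpace ℝ (Fin d))
    (hp0 : p 0 = F (x 0))
    (hp : ∀ (k : ℕ) (j : Fin d),
      p (k + 1) j = F (WithLp.toLp 2 (fun j' => if blk j' < blk j then x (k + 1) j' else x k j')) j)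
    (hq : ∀ (k : ℕ) (j : Fin d),
      q (k + 1) j = p (k + 1) j + a k / a (k + 1) * (F (x k) j - p k j))
    -- estimation sequence and its minimization property
    (ψ : ℕ → EuclideanSpace ℝ (Fin d) → EuclideanSpace ℝ (Fin d) → ℝ)
    (hψ : ∀ (k : ℕ) (z u : EuclideanSpace ℝ (Fin d)),
      ψ k z u = ∑ j ∈ Finset.Icc 1 k, a j * (⟪q j, z - u⟫ + G z - G u)
        + 1 / 2 * ‖z - x 0‖ ^ 2)
    -- the smooth part and its gradient
    (f : EuclideanSpace ℝ (Fin d) → ℝ)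
    (hfconv : ConvexOn ℝ Set.univ f)
    (hfdiff : ∀ z : EuclideanSpace ℝ (Fin d), DifferentiableAt ℝ f z)
    (hFgrad : ∀ z : EuclideanSpace ℝ (Fin d), F z = gradient f z)
    (hxmin : ∀ k : ℕ, 1 ≤ k → ∀ u z : EuclideanSpace ℝ (Fin d), ψ k (x k) u ≤ ψ k z u)
    -- averaged iterates
    (xt : ℕ → EuclideanSpace ℝ (Fin d))
    (hxt : ∀ k : ℕ, xt k = (A k)⁻¹ • ∑ j ∈ Finset.Icc 1 k, a j • x j)
    -- a minimizer of f + g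
    (xstar : EuclideanSpace ℝ (Fin d))
    (hstar : ∀ z : EuclideanSpace ℝ (Fin d), f xstar + G xstar ≤ f z + G z) :
    ∀ k : ℕ, 1 ≤ k →
      f (xt k) + G (xt k) - (f xstar + G xstar) ≤ ‖xstar - x 0‖ ^ 2 / (2 * A k) ∧
      A k ≥ max ((k : ℝ) / (2 * L)) (1 / (2 * L) * (1 + γ / (2 * L)) ^ (k - 1)) := by
  classical
  have hL0 : (0:ℝ) ≤ L := le_of_lt hL
  have h2L : (0:ℝ) < 2 * L := by linarith
  -- step size basics
  have hAnn : ∀ k, 0 ≤ A k := by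
    intro k
    induction k with
    | zero => rw [hA0]
    | succ n ih =>
      have h1 : 0 ≤ γ * A n := mul_nonneg hγ ih
      have h2 : 0 ≤ a (n+1) := by rw [ha n]; positivity
      rw [hA n]; linarith
  have hapos : ∀ n : ℕ, 0 < a (n+1) := by
    intro n
    have h1 : 0 ≤ γ * A n := mul_nonneg hγ (hAnn n)
    rw [ha n]
    apply div_pos (by linarith) h2L
  have hann : ∀ n, 0 ≤ a n := by
    intro n
    cases n with
    | zero => rw [ha0]
    | succ n => exact (hapos n).le
  have hApos : ∀ k, 1 ≤ k → 0 < A k := by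
    intro k hk
    obtain ⟨n, rfl⟩ : ∃ n, k = n + 1 := ⟨k - 1, by omega⟩
    rw [hA n]
    have := hapos n
    have := hAnn n
    linarith
  have hAstep : ∀ n, A n ≤ A (n+1) := by
    intro n; rw [hA n]; linarith [hapos n]
  have hAmono : Monotone A := monotone_nat_of_le_succ hAstep
  have hamono : ∀ n, a n ≤ a (n+1) := by
    intro n
    cases n with
    | zero => rw [ha0]; exact (hapos 0).le
    | succ n =>
      rw [ha n, ha (n+1)]
      refine (div_le_div_iff_of_pos_right h2L).mpr ?_
      have := mul_le_mul_of_nonneg_left (hAstep n) hγ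
      linarith
  have h2La : ∀ n, 2 * L * a (n+1) = 1 + γ * A n := by
    intro n; rw [ha n]; field_simp
  have hAsum : ∀ k, A k = ∑ j ∈ Finset.Icc 1 k, a j := by
    intro k
    induction k with
    | zero => simp [hA0]
    | succ n ih =>
      rw [Finset.sum_Icc_succ_top (by omega : 1 ≤ n + 1), ← ih, hA n]
  -- lower bounds on A
  have lb1 : ∀ k : ℕ, (k : ℝ) / (2 * L) ≤ A k := by
    intro k
    induction k with
    | zero => simp [hA0]
    | succ n ih =>
      have h1 : 1 / (2*L) ≤ a (n+1) := by
        rw [ha n]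
        refine (div_le_div_iff_of_pos_right h2L).mpr ?_
        have := mul_nonneg hγ (hAnn n)
        linarith
      push_cast
      rw [hA n]
      have : ((n:ℝ) + 1) / (2*L) = (n:ℝ)/(2*L) + 1/(2*L) := by ring
      rw [this]
      linarith
  have lb2 : ∀ k : ℕ, 1 ≤ k → 1 / (2 * L) * (1 + γ / (2 * L)) ^ (k - 1) ≤ A k := by
    intro k hk
    induction k, hk using Nat.le_induction with
    | base =>
      have : A 1 = 1 / (2*L) := by
        rw [hA 0, ha 0, hA0]; ring
      rw [this]; norm_num
    | succ n hn ih =>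
      have hpow : (1 + γ / (2*L)) ^ ((n+1) - 1) = (1 + γ/(2*L)) ^ (n - 1) * (1 + γ/(2*L)) := by
        have : (n+1) - 1 = (n - 1) + 1 := by omega
        rw [this, pow_succ]
      have hfac : (0:ℝ) ≤ 1 + γ/(2*L) := by positivity
      have key := mul_le_mul_of_nonneg_right ih hfac
      have hexp : A (n+1) = A n + (1 + γ * A n) / (2*L) := by rw [hA n, ha n]
      have hgA : γ * A n / (2*L) = A n * (γ / (2*L)) := by ring
      have h1 : A n * (1 + γ/(2*L)) ≤ A (n+1) := by
        rw [hexp]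
        have : A n * (1 + γ/(2*L)) = A n + γ * A n/(2*L) := by ring
        rw [this]
        have h2 : γ * A n / (2*L) ≤ (1 + γ * A n)/(2*L) := by
          exact (div_le_div_iff_of_pos_right h2L).mpr (by linarith)
        linarith
      calc 1/(2*L) * (1 + γ/(2*L)) ^ ((n+1)-1)
          = (1/(2*L) * (1 + γ/(2*L)) ^ (n-1)) * (1 + γ/(2*L)) := by rw [hpow]; ring
        _ ≤ A n * (1 + γ/(2*L)) := key
        _ ≤ A (n+1) := h1
  -- convexity facts for G
  have hGsc : ConvexOn ℝ Set.univ (fun z : EuclideanSpace ℝ (Fin d) => G z - γ / 2 * ‖z‖ ^ 2) := by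
    have heq : (fun z : EuclideanSpace ℝ (Fin d) => G z - γ / 2 * ‖z‖ ^ 2)
        = fun z => ∑ i : Fin m,
            (g i z - γ / 2 * ∑ j ∈ Finset.univ.filter (fun j => blk j = i), (z j) ^ 2) := by
      funext z
      rw [Finset.sum_sub_distrib, ← hG z]
      congr 1
      rw [← Finset.mul_sum, Finset.sum_fiberwise _ blk _, aux_norm_sq]
    rw [heq]
    exact aux_convexOn_sum Finset.univ _ (fun i _ => hgsc i)
  have hGconv : ConvexOn ℝ Set.univ G := by
    have heq : G = fun z => (G z - γ / 2 * ‖z‖ ^ 2) + γ / 2 * ‖z‖ ^ 2 := by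
      funext z; ring
    rw [heq]
    exact hGsc.add (aux_normsq_convexOn (by positivity))
  have hfg : ConvexOn ℝ Set.univ (fun z : EuclideanSpace ℝ (Fin d) => f z + G z) :=
    hfconv.add hGconv
  have hgrad : ∀ z w : EuclideanSpace ℝ (Fin d), f z - f w ≤ ⟪F z, z - w⟫ := by
    intro z w
    rw [hFgrad z]
    exact aux_grad_ineq hfconv hfdiff z w
  -- estimate sequence machinery
  have hψform : ∀ (j : ℕ) (u z : EuclideanSpace ℝ (Fin d)),
      ψ j z u = ⟪∑ i ∈ Finset.Icc 1 j, a i • q i, z - u⟫ + A j * (G z - G u)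
        + 1 / 2 * ‖z - x 0‖ ^ 2 := by
    intro j u z
    rw [hψ j z u]
    have hs : ∑ i ∈ Finset.Icc 1 j, a i * (⟪q i, z - u⟫ + G z - G u)
        = (∑ i ∈ Finset.Icc 1 j, a i * ⟪q i, z - u⟫)
          + (∑ i ∈ Finset.Icc 1 j, a i) * (G z - G u) := by
      rw [Finset.sum_mul, ← Finset.sum_add_distrib]
      exact Finset.sum_congr rfl fun i _ => by ring
    rw [hs, ← hAsum j, sum_inner]
    have : ∀ i ∈ Finset.Icc 1 j, ⟪a i • q i, z - u⟫ = a i * ⟪q i, z - u⟫ :=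
      fun i _ => real_inner_smul_left _ _ _
    rw [Finset.sum_congr rfl this]
  have hψsc : ∀ (j : ℕ) (u : EuclideanSpace ℝ (Fin d)),
      ConvexOn ℝ Set.univ (fun z => ψ j z u - (1 + γ * A j) / 2 * ‖z‖ ^ 2) := by
    intro j u
    have h := aux_psi_convexOn G γ hGsc (A j) (hAnn j)
      (∑ i ∈ Finset.Icc 1 j, a i • q i) (x 0) u (G u)
    have heq : (fun z => ψ j z u - (1 + γ * A j) / 2 * ‖z‖ ^ 2)
        = fun z : EuclideanSpace ℝ (Fin d) =>
            (⟪∑ i ∈ Finset.Icc 1 j, a i • q i, z - u⟫ + A j * (G z - G u)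
              + 1/2 * ‖z - x 0‖ ^ 2) - (1 + γ * A j) / 2 * ‖z‖ ^ 2 := by
      funext z; rw [hψform j u z]
    rw [heq]
    exact h
  have hψmin : ∀ (j : ℕ) (u z : EuclideanSpace ℝ (Fin d)),
      ψ j (x j) u + (1 + γ * A j) / 2 * ‖z - x j‖ ^ 2 ≤ ψ j z u := by
    intro j u z
    cases j with
    | zero =>
      have h0 : ψ 0 (x 0) u = 0 := by rw [hψ]; simp
      have hz : ψ 0 z u = 1/2 * ‖z - x 0‖ ^ 2 := by rw [hψ]; simp
      rw [h0, hz, hA0]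
      ring_nf
      rfl
    | succ n =>
      have hμ : (0:ℝ) ≤ 1 + γ * A (n+1) := by
        have := mul_nonneg hγ (hAnn (n+1)); linarith
      exact aux_strong_min hμ (hψsc (n+1) u) (fun z' => hxmin (n+1) (by omega) u z') z
  have hψ00 : ∀ u : EuclideanSpace ℝ (Fin d), ψ 0 (x 0) u = 0 := by
    intro u; rw [hψ]; simp
  have hψuu : ∀ (k : ℕ) (u : EuclideanSpace ℝ (Fin d)), ψ k u u = 1/2 * ‖u - x 0‖ ^ 2 := by
    intro k u; rw [hψ]; simp
  have hψrec : ∀ (n : ℕ) (z u : EuclideanSpace ℝ (Fin d)),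
      ψ (n+1) z u = ψ n z u + a (n+1) * (⟪q (n+1), z - u⟫ + G z - G u) := by
    intro n z u
    rw [hψ, hψ, Finset.sum_Icc_succ_top (by omega : 1 ≤ n + 1)]
    ring
  -- fix the comparison point
  set u : EuclideanSpace ℝ (Fin d) := xstar with hu
  -- the first key bound
  have hT1 : ∀ k : ℕ, ∑ j ∈ Finset.Icc 1 k, a j * (⟪q j, x j - u⟫ + G (x j) - G u)
      ≤ 1/2 * ‖u - x 0‖ ^ 2 - (1 + γ * A k) / 2 * ‖u - x k‖ ^ 2
        - ∑ j ∈ Finset.Icc 1 k, (L * a j) * ‖x j - x (j - 1)‖ ^ 2 := by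
    intro k
    set c : ℕ → ℝ := fun j => ψ j (x j) u with hc
    have hterm : ∀ j ∈ Finset.Icc 1 k,
        a j * (⟪q j, x j - u⟫ + G (x j) - G u)
          ≤ (c j - c (j - 1)) - (L * a j) * ‖x j - x (j - 1)‖ ^ 2 := by
      intro j hj
      have hj1 : 1 ≤ j := (Finset.mem_Icc.mp hj).1
      obtain ⟨n, rfl⟩ : ∃ n, j = n + 1 := ⟨j - 1, by omega⟩
      have h1 : a (n+1) * (⟪q (n+1), x (n+1) - u⟫ + G (x (n+1)) - G u)
          = ψ (n+1) (x (n+1)) u - ψ n (x (n+1)) u := by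
        rw [hψrec n (x (n+1)) u]; ring
      have h2 := hψmin n u (x (n+1))
      have h3 : (1 + γ * A n) / 2 = L * a (n+1) := by
        rw [← h2La n]; ring
      rw [h3] at h2
      simp only [Nat.add_sub_cancel, hc]
      linarith
    calc ∑ j ∈ Finset.Icc 1 k, a j * (⟪q j, x j - u⟫ + G (x j) - G u)
        ≤ ∑ j ∈ Finset.Icc 1 k,
            ((c j - c (j - 1)) - (L * a j) * ‖x j - x (j - 1)‖ ^ 2) :=
          Finset.sum_le_sum hterm
      _ = (c k - c 0) - ∑ j ∈ Finset.Icc 1 k, (L * a j) * ‖x j - x (j - 1)‖ ^ 2 := by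
          rw [Finset.sum_sub_distrib, aux_telescope c k]
      _ ≤ 1/2 * ‖u - x 0‖ ^ 2 - (1 + γ * A k) / 2 * ‖u - x k‖ ^ 2
          - ∑ j ∈ Finset.Icc 1 k, (L * a j) * ‖x j - x (j - 1)‖ ^ 2 := by
          have hc0 : c 0 = 0 := hψ00 u
          have hck : c k + (1 + γ * A k) / 2 * ‖u - x k‖ ^ 2 ≤ 1/2 * ‖u - x 0‖ ^ 2 := by
            have := hψmin k u u
            rw [hψuu k u] at this
            exact this
          linarith
  -- the extrapolation error
  set D : ℕ → EuclideanSpace ℝ (Fin d) := fun j => F (x j) - p j with hDdef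
  have hDb : ∀ (j : ℕ), 1 ≤ j → ∀ v : EuclideanSpace ℝ (Fin d),
      ⟪D j, v⟫ ≤ L * ‖x j - x (j-1)‖ * ‖v‖ := by
    intro j hj v
    obtain ⟨n, rfl⟩ : ∃ n, j = n + 1 := ⟨j - 1, by omega⟩
    simp only [Nat.add_sub_cancel]
    exact aux_Dbound blk F L hL0 Q Qhat hlip hQhat hL2 (x (n+1)) (x n) (p (n+1))
      (fun ℓ => hp n ℓ) v
  have hsplitFq : ∀ (n : ℕ) (v : EuclideanSpace ℝ (Fin d)),
      a (n+1) * ⟪F (x (n+1)) - q (n+1), v⟫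
        = a (n+1) * ⟪D (n+1), v⟫ - a n * ⟪D n, v⟫ := by
    intro n v
    have hqv : F (x (n+1)) - q (n+1) = D (n+1) - (a n / a (n+1)) • D n := by
      ext ℓ
      simp only [hDdef, PiLp.sub_apply, PiLp.smul_apply, smul_eq_mul]
      rw [hq n ℓ]
      ring
    rw [hqv, inner_sub_left, real_inner_smul_left]
    have hne : a (n+1) ≠ 0 := ne_of_gt (hapos n)
    field_simp
  have haprev : ∀ j : ℕ, a (j-1) ≤ a j := by
    intro j
    cases j with
    | zero => exact le_refl _
    | succ n => simpa only [Nat.add_sub_cancel] using hamono n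
  -- the second key bound
  have hS : ∀ k : ℕ, 1 ≤ k →
      ∑ j ∈ Finset.Icc 1 k, a j * ⟪F (x j) - q j, x j - u⟫
        ≤ (1 + γ * A k) / 2 * ‖u - x k‖ ^ 2
          + ∑ j ∈ Finset.Icc 1 k, (L * a j) * ‖x j - x (j-1)‖ ^ 2 := by
    intro k hk
    have hsum1 : ∑ j ∈ Finset.Icc 1 k, a j * ⟪F (x j) - q j, x j - u⟫
        = ∑ j ∈ Finset.Icc 1 k,
            (a j * ⟪D j, x j - u⟫ - a (j-1) * ⟪D (j-1), x j - u⟫) := by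
      refine Finset.sum_congr rfl fun j hj => ?_
      have hj1 : 1 ≤ j := (Finset.mem_Icc.mp hj).1
      obtain ⟨n, rfl⟩ : ∃ n, j = n + 1 := ⟨j - 1, by omega⟩
      simp only [Nat.add_sub_cancel]
      exact hsplitFq n (x (n+1) - u)
    have hCsum : ∑ j ∈ Finset.Icc 1 k, a (j-1) * ⟪D (j-1), x j - u⟫
        = ∑ j ∈ Finset.Icc 1 (k-1), a j * ⟪D j, x (j+1) - u⟫ := by
      rw [aux_split_first (fun j => a (j-1) * ⟪D (j-1), x j - u⟫) k hk]
      have h1 : a (1-1) * ⟪D (1-1), x 1 - u⟫ = 0 := by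
        norm_num [ha0]
      have h2 : Finset.Icc 2 k = Finset.Icc (1+1) ((k-1)+1) := by congr 1; omega
      rw [h1, h2, aux_shift (fun j => a (j-1) * ⟪D (j-1), x j - u⟫) 1 (k-1), zero_add]
      exact Finset.sum_congr rfl fun j _ => by simp only [Nat.add_sub_cancel]
    have hBsum : ∑ j ∈ Finset.Icc 1 k, a j * ⟪D j, x j - u⟫
        = a k * ⟪D k, x k - u⟫ + ∑ j ∈ Finset.Icc 1 (k-1), a j * ⟪D j, x j - u⟫ := by
      have h := Finset.sum_Icc_succ_top (by omega : 1 ≤ (k-1)+1)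
        (fun j => a j * ⟪D j, x j - u⟫)
      rw [show (k-1)+1 = k from by omega] at h
      rw [h]; ring
    have hmain : ∑ j ∈ Finset.Icc 1 k, a j * ⟪F (x j) - q j, x j - u⟫
        = a k * ⟪D k, x k - u⟫
          + ∑ j ∈ Finset.Icc 1 (k-1), a j * ⟪D j, x j - x (j+1)⟫ := by
      rw [hsum1, Finset.sum_sub_distrib, hCsum, hBsum, add_sub_assoc,
        ← Finset.sum_sub_distrib]
      congr 1
      refine Finset.sum_congr rfl fun j hj => ?_
      rw [← mul_sub, ← inner_sub_right]
      congr 2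
      abel
    -- bound the top term
    have hBk : a k * ⟪D k, x k - u⟫
        ≤ (L * a k / 2) * (‖x k - x (k-1)‖ ^ 2 + ‖u - x k‖ ^ 2) := by
      have h1 : ⟪D k, x k - u⟫ ≤ L * ‖x k - x (k-1)‖ * ‖x k - u‖ := hDb k hk _
      have h2 : ‖x k - u‖ = ‖u - x k‖ := norm_sub_rev _ _
      rw [h2] at h1
      have amg : ‖x k - x (k-1)‖ * ‖u - x k‖
          ≤ (‖x k - x (k-1)‖ ^ 2 + ‖u - x k‖ ^ 2) / 2 := by
        nlinarith [sq_nonneg (‖x k - x (k-1)‖ - ‖u - x k‖)]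
      calc a k * ⟪D k, x k - u⟫
          ≤ a k * (L * ‖x k - x (k-1)‖ * ‖u - x k‖) :=
            mul_le_mul_of_nonneg_left h1 (hann k)
        _ = (L * a k) * (‖x k - x (k-1)‖ * ‖u - x k‖) := by ring
        _ ≤ (L * a k) * ((‖x k - x (k-1)‖ ^ 2 + ‖u - x k‖ ^ 2) / 2) :=
            mul_le_mul_of_nonneg_left amg (mul_nonneg hL0 (hann k))
        _ = (L * a k / 2) * (‖x k - x (k-1)‖ ^ 2 + ‖u - x k‖ ^ 2) := by ring
    -- bound the middle terms
    have hterm2 : ∀ j ∈ Finset.Icc 1 (k-1),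
        a j * ⟪D j, x j - x (j+1)⟫
          ≤ (L * a j / 2) * (‖x j - x (j-1)‖ ^ 2 + ‖x (j+1) - x j‖ ^ 2) := by
      intro j hj
      have hj1 : 1 ≤ j := (Finset.mem_Icc.mp hj).1
      have h1 : ⟪D j, x j - x (j+1)⟫ ≤ L * ‖x j - x (j-1)‖ * ‖x j - x (j+1)‖ :=
        hDb j hj1 _
      have h2 : ‖x j - x (j+1)‖ = ‖x (j+1) - x j‖ := norm_sub_rev _ _
      rw [h2] at h1
      have amg : ‖x j - x (j-1)‖ * ‖x (j+1) - x j‖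
          ≤ (‖x j - x (j-1)‖ ^ 2 + ‖x (j+1) - x j‖ ^ 2) / 2 := by
        nlinarith [sq_nonneg (‖x j - x (j-1)‖ - ‖x (j+1) - x j‖)]
      calc a j * ⟪D j, x j - x (j+1)⟫
          ≤ a j * (L * ‖x j - x (j-1)‖ * ‖x (j+1) - x j‖) :=
            mul_le_mul_of_nonneg_left h1 (hann j)
        _ = (L * a j) * (‖x j - x (j-1)‖ * ‖x (j+1) - x j‖) := by ring
        _ ≤ (L * a j) * ((‖x j - x (j-1)‖ ^ 2 + ‖x (j+1) - x j‖ ^ 2) / 2) :=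
            mul_le_mul_of_nonneg_left amg (mul_nonneg hL0 (hann j))
        _ = (L * a j / 2) * (‖x j - x (j-1)‖ ^ 2 + ‖x (j+1) - x j‖ ^ 2) := by ring
    have hmid : ∑ j ∈ Finset.Icc 1 (k-1), a j * ⟪D j, x j - x (j+1)⟫
        ≤ ∑ j ∈ Finset.Icc 1 (k-1),
            (L * a j / 2) * (‖x j - x (j-1)‖ ^ 2 + ‖x (j+1) - x j‖ ^ 2) :=
      Finset.sum_le_sum hterm2
    -- reindex and absorb
    have hX : ∑ j ∈ Finset.Icc 1 (k-1),
        (L * a j / 2) * (‖x j - x (j-1)‖ ^ 2 + ‖x (j+1) - x j‖ ^ 2)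
        = ∑ j ∈ Finset.Icc 1 (k-1), (L * a j / 2) * ‖x j - x (j-1)‖ ^ 2
          + ∑ j ∈ Finset.Icc 1 (k-1), (L * a j / 2) * ‖x (j+1) - x j‖ ^ 2 := by
      rw [← Finset.sum_add_distrib]
      exact Finset.sum_congr rfl fun j _ => by ring
    have hX1 : ∑ j ∈ Finset.Icc 1 (k-1), (L * a j / 2) * ‖x j - x (j-1)‖ ^ 2
          + (L * a k / 2) * ‖x k - x (k-1)‖ ^ 2
        = ∑ j ∈ Finset.Icc 1 k, (L * a j / 2) * ‖x j - x (j-1)‖ ^ 2 := by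
      have h := Finset.sum_Icc_succ_top (by omega : 1 ≤ (k-1)+1)
        (fun j => (L * a j / 2) * ‖x j - x (j-1)‖ ^ 2)
      rw [show (k-1)+1 = k from by omega] at h
      rw [h]
    have hX2 : ∑ j ∈ Finset.Icc 1 (k-1), (L * a j / 2) * ‖x (j+1) - x j‖ ^ 2
        ≤ ∑ j ∈ Finset.Icc 1 k, (L * a j / 2) * ‖x j - x (j-1)‖ ^ 2 := by
      have e1 : ∑ j ∈ Finset.Icc 1 (k-1), (L * a j / 2) * ‖x (j+1) - x j‖ ^ 2
          = ∑ j ∈ Finset.Icc 2 k, (L * a (j-1) / 2) * ‖x j - x (j-1)‖ ^ 2 := by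
        have h2 : Finset.Icc 2 k = Finset.Icc (1+1) ((k-1)+1) := by congr 1; omega
        rw [h2, aux_shift (fun j => (L * a (j-1) / 2) * ‖x j - x (j-1)‖ ^ 2) 1 (k-1)]
        exact Finset.sum_congr rfl fun j _ => by simp only [Nat.add_sub_cancel]
      rw [e1]
      have e2 : ∑ j ∈ Finset.Icc 2 k, (L * a (j-1) / 2) * ‖x j - x (j-1)‖ ^ 2
          ≤ ∑ j ∈ Finset.Icc 2 k, (L * a j / 2) * ‖x j - x (j-1)‖ ^ 2 := by
        refine Finset.sum_le_sum fun j _ => ?_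
        have h3 := haprev j
        have h4 : L * a (j-1) / 2 ≤ L * a j / 2 := by
          have := mul_le_mul_of_nonneg_left h3 hL0
          linarith
        exact mul_le_mul_of_nonneg_right h4 (sq_nonneg _)
      refine e2.trans ?_
      refine Finset.sum_le_sum_of_subset_of_nonneg ?_ ?_
      · intro j hj
        simp only [Finset.mem_Icc] at *
        omega
      · intro j _ _
        have := hann j
        positivity
    have hak : L * a k ≤ (1 + γ * A k) / 2 := by
      obtain ⟨n, rfl⟩ : ∃ n, k = n+1 := ⟨k-1, by omega⟩
      have h1 := h2La n
      have h2 := mul_le_mul_of_nonneg_left (hAstep n) hγ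
      linarith
    have hcnn : (0:ℝ) ≤ ‖u - x k‖ ^ 2 := sq_nonneg _
    have hdouble : ∑ j ∈ Finset.Icc 1 k, (L * a j / 2) * ‖x j - x (j-1)‖ ^ 2
          + ∑ j ∈ Finset.Icc 1 k, (L * a j / 2) * ‖x j - x (j-1)‖ ^ 2
        = ∑ j ∈ Finset.Icc 1 k, (L * a j) * ‖x j - x (j-1)‖ ^ 2 := by
      rw [← Finset.sum_add_distrib]
      exact Finset.sum_congr rfl fun j _ => by ring
    rw [hmain]
    have hLak2 : (L * a k / 2) * ‖u - x k‖ ^ 2 ≤ (1 + γ * A k) / 2 * ‖u - x k‖ ^ 2 := by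
      have : L * a k / 2 ≤ (1 + γ * A k) / 2 := by
        have h0 : 0 ≤ L * a k := mul_nonneg hL0 (hann k)
        linarith
      exact mul_le_mul_of_nonneg_right this hcnn
    linarith [hmid, hX, hX1, hX2, hBk, hdouble, hLak2]
  -- final assembly
  intro k hk
  have hAk : 0 < A k := hApos k hk
  constructor
  · have hJ := aux_jensen (fun z => f z + G z) hfg k a x (A k) hAk (hAsum k).symm hann
    beta_reduce at hJ
    rw [← hxt k] at hJ
    have hE1 : ∑ j ∈ Finset.Icc 1 k, a j * (f (x j) + G (x j)) - A k * (f u + G u)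
        ≤ ∑ j ∈ Finset.Icc 1 k, a j * (⟪F (x j), x j - u⟫ + G (x j) - G u) := by
      have hc : A k * (f u + G u) = ∑ j ∈ Finset.Icc 1 k, a j * (f u + G u) := by
        rw [← Finset.sum_mul, ← hAsum k]
      rw [hc, ← Finset.sum_sub_distrib]
      refine Finset.sum_le_sum fun j _ => ?_
      have h1 : f (x j) - f u ≤ ⟪F (x j), x j - u⟫ := hgrad (x j) u
      have h2 := mul_le_mul_of_nonneg_left h1 (hann j)
      calc a j * (f (x j) + G (x j)) - a j * (f u + G u)
          = a j * (f (x j) - f u) + a j * (G (x j) - G u) := by ring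
        _ ≤ a j * ⟪F (x j), x j - u⟫ + a j * (G (x j) - G u) := by linarith
        _ = a j * (⟪F (x j), x j - u⟫ + G (x j) - G u) := by ring
    have hsplit2 : ∑ j ∈ Finset.Icc 1 k, a j * (⟪F (x j), x j - u⟫ + G (x j) - G u)
        = ∑ j ∈ Finset.Icc 1 k, a j * (⟪q j, x j - u⟫ + G (x j) - G u)
          + ∑ j ∈ Finset.Icc 1 k, a j * ⟪F (x j) - q j, x j - u⟫ := by
      rw [← Finset.sum_add_distrib]
      refine Finset.sum_congr rfl fun j _ => ?_
      rw [inner_sub_left]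
      ring
    rw [hsplit2] at hE1
    have t1 := hT1 k
    have t2 := hS k hk
    have hfinal : A k * (f (xt k) + G (xt k)) - A k * (f u + G u)
        ≤ 1/2 * ‖u - x 0‖ ^ 2 := by linarith
    rw [le_div_iff₀ (by positivity : (0:ℝ) < 2 * A k)]
    calc (f (xt k) + G (xt k) - (f u + G u)) * (2 * A k)
        = 2 * (A k * (f (xt k) + G (xt k)) - A k * (f u + G u)) := by ring
      _ ≤ 2 * (1/2 * ‖u - x 0‖ ^ 2) := by linarith
      _ = ‖u - x 0‖ ^ 2 := by ring
  · rw [ge_iff_le, max_le_iff]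
    exact ⟨lb1 k, lb2 k hk⟩
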